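/- Let n ≥ 2, α ∈ [−1, 0), R > 0, T > 0 and c > 1. Define Ψ̄(x,t) = C_α ( (T − ct)/(|x|² + R²) )^{1/α}, where C_α > 0 satisfies C_α^α = 2 n^{α−1}(n − 2/α). Then for all x ∈ ℝⁿ and 0 ≤ t < T/c one has the identity ∂_t Ψ̄ − Σ_i ∂_{x_i}( n^{α−1} Ψ̄^{−α} ∂_{x_i} Ψ̄ ) = [ c + nα/(2−nα) − (2/(2−nα)) · |x|²/(|x|²+R²) ] · (−Ψ̄)/(α(T−ct)), and consequently ∂_t Ψ̄ − Σ_i ∂_{x_i}( n^{α−1} Ψ̄^{−α} ∂_{x_i} Ψ̄ ) > (c−1) · (−Ψ̄)/(α(T−ct)) > 0; that is, Ψ̄ is a strict supersolution of the porous medium equation on ℝⁿ × [0, T/c). -/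

import Mathlib

set_option maxHeartbeats 1000000

/-- Partial derivative in the `i`-th coordinate direction. -/
noncomputable def pd {n : ℕ} (i : Fin n) (f : EuclideanSpace ℝ (Fin n) → ℝ)
    (x : EuclideanSpace ℝ (Fin n)) : ℝ :=
  fderiv ℝ f x (EuclideanSpace.single i (1 : ℝ))

lemma pd_rpow_aux (n : ℕ) (R b pp : ℝ) (hR : 0 < R) (y : EuclideanSpace ℝ (Fin n)) (i : Fin n) :
    pd i (fun z => b * (‖z‖^2 + R^2) ^ pp) y
      = b * (pp * (‖y‖^2 + R^2) ^ (pp-1)) * (2 * y i) := by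
  have h1 : HasFDerivAt (fun z : EuclideanSpace ℝ (Fin n) => ‖z‖^2 + R^2)
      (2 • (innerSL ℝ y)) y := (hasStrictFDerivAt_norm_sq y).hasFDerivAt.add_const _
  have h2 := (h1.rpow_const (p := pp) (Or.inl (by positivity))).const_mul b
  rw [pd, h2.fderiv]
  simp [EuclideanSpace.inner_single_right, real_inner_comm]
  ring

lemma pd_rpow_mul_aux (n : ℕ) (R b pp : ℝ) (hR : 0 < R) (x : EuclideanSpace ℝ (Fin n))
    (i : Fin n) :
    pd i (fun y => (b * (‖y‖^2 + R^2) ^ pp) * y i) x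
      = b * (‖x‖^2 + R^2) ^ pp + b * (pp * (‖x‖^2 + R^2) ^ (pp-1)) * (2 * x i * x i) := by
  have h1 : HasFDerivAt (fun z : EuclideanSpace ℝ (Fin n) => ‖z‖^2 + R^2)
      (2 • (innerSL ℝ x)) x := (hasStrictFDerivAt_norm_sq x).hasFDerivAt.add_const _
  have h2 := (h1.rpow_const (p := pp) (Or.inl (by positivity))).const_mul b
  have h3 : HasFDerivAt (fun y : EuclideanSpace ℝ (Fin n) => y i)
      (EuclideanSpace.proj (𝕜 := ℝ) i : EuclideanSpace ℝ (Fin n) →L[ℝ] ℝ) x :=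
    (EuclideanSpace.proj (𝕜 := ℝ) (ι := Fin n) i).hasFDerivAt
  have h4 := h2.mul h3
  rw [pd, (show HasFDerivAt (fun y : EuclideanSpace ℝ (Fin n) => b * (‖y‖^2 + R^2) ^ pp * y i) _ x from h4).fderiv]
  simp [EuclideanSpace.inner_single_right, real_inner_comm, EuclideanSpace.single_apply]
  ring

lemma sum_coord_sq (n : ℕ) (x : EuclideanSpace ℝ (Fin n)) : ∑ i, x i * x i = ‖x‖^2 := by
  rw [EuclideanSpace.norm_eq, Real.sq_sqrt (by positivity)]
  apply Finset.sum_congr rfl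
  intro i _
  simp [sq_abs, sq]

lemma sum_const_mul_coord_sq (n : ℕ) (x : EuclideanSpace ℝ (Fin n)) (C : ℝ) :
    ∑ i, C * (2 * x i * x i) = C * (2 * ‖x‖^2) := by
  calc ∑ i, C * (2 * x i * x i) = ∑ i, (2*C) * (x i * x i) := by
        apply Finset.sum_congr rfl; intros; ring
    _ = (2*C) * ∑ i, x i * x i := (Finset.mul_sum _ _ _).symm
    _ = (2*C) * ‖x‖^2 := by rw [sum_coord_sq]
    _ = C * (2 * ‖x‖^2) := by ring

theorem pme_barrier_supersolution (n : ℕ) (hn : 2 ≤ n) (α R T c : ℝ)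
    (hα : -1 ≤ α ∧ α < 0) (hR : 0 < R) (hT : 0 < T) (hc : 1 < c)
    (Cα : ℝ) (hCpos : 0 < Cα)
    (hCα : Cα ^ α = 2 * (n : ℝ) ^ (α - 1) * ((n : ℝ) - 2 / α))
    (Ψ : EuclideanSpace ℝ (Fin n) → ℝ → ℝ)
    (hΨ : ∀ x s, Ψ x s = Cα * ((T - c * s) / (‖x‖ ^ 2 + R ^ 2)) ^ (1 / α)) :
    ∀ (x : EuclideanSpace ℝ (Fin n)) (t : ℝ), 0 ≤ t → t < T / c →
      (deriv (Ψ x) t -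
          ∑ i, pd i (fun y =>
            (n : ℝ) ^ (α - 1) * (Ψ y t) ^ (-α) * pd i (fun z => Ψ z t) y) x =
        (c + n * α / (2 - n * α) -
            (2 / (2 - n * α)) * ‖x‖ ^ 2 / (‖x‖ ^ 2 + R ^ 2)) *
          (-(Ψ x t)) / (α * (T - c * t))) ∧
      (deriv (Ψ x) t -
          ∑ i, pd i (fun y =>
            (n : ℝ) ^ (α - 1) * (Ψ y t) ^ (-α) * pd i (fun z => Ψ z t) y) x >
        (c - 1) * (-(Ψ x t)) / (α * (T - c * t))) ∧
      ((c - 1) * (-(Ψ x t)) / (α * (T - c * t)) > 0) := by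
  obtain ⟨hα1, hα0⟩ := hα
  intro x t ht htc
  have hαne : α ≠ 0 := ne_of_lt hα0
  have hcpos : (0:ℝ) < c := by linarith
  have hs : 0 < T - c * t := by
    rw [lt_div_iff₀ hcpos] at htc
    linarith [mul_comm t c]
  have hq : 0 < ‖x‖^2 + R^2 := by positivity
  have hn2 : (2:ℝ) ≤ (n:ℝ) := by exact_mod_cast hn
  have hn0 : (0:ℝ) < (n:ℝ) := by linarith
  have hN : 0 < (n:ℝ)^(α-1) := Real.rpow_pos_of_pos hn0 _
  have h2nα : 0 < 2 - (n:ℝ)*α := by nlinarith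
  have hn2α : 0 < (n:ℝ) - 2/α := by
    have : 2/α < 0 := div_neg_of_pos_of_neg two_pos hα0
    linarith
  have hSpos : 0 < (T - c*t)^(1/α) := Real.rpow_pos_of_pos hs _
  have hQpos : 0 < (‖x‖^2+R^2)^(1/α) := Real.rpow_pos_of_pos hq _
  have ha : 0 < Cα * (T - c*t)^(1/α) := mul_pos hCpos hSpos
  -- pointwise form of Ψ(·,t)
  have hfun : ∀ z : EuclideanSpace ℝ (Fin n),
      Ψ z t = (Cα * (T - c*t)^(1/α)) * (‖z‖^2 + R^2) ^ (-(1/α)) := by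
    intro z
    rw [hΨ, Real.div_rpow hs.le (by positivity), div_eq_mul_inv,
      ← Real.rpow_neg (by positivity), mul_assoc]
  have hfunext : (fun z : EuclideanSpace ℝ (Fin n) => Ψ z t)
      = fun z => (Cα * (T - c*t)^(1/α)) * (‖z‖^2 + R^2) ^ (-(1/α)) := funext hfun
  have pdΨ : ∀ (y : EuclideanSpace ℝ (Fin n)) (i : Fin n),
      pd i (fun z => Ψ z t) y
        = (Cα * (T - c*t)^(1/α)) * ((-(1/α)) * (‖y‖^2+R^2)^((-(1/α))-1)) * (2 * y i) := by
    intro y i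
    rw [hfunext]
    exact pd_rpow_aux n R _ _ hR y i
  set b : ℝ := 2 * (n:ℝ)^(α-1) * (-(1/α)) *
      ((Cα * (T - c*t)^(1/α))^(-α) * (Cα * (T - c*t)^(1/α))) with hbdef
  have hflux : ∀ i : Fin n,
      (fun y : EuclideanSpace ℝ (Fin n) =>
          (n:ℝ)^(α-1) * (Ψ y t)^(-α) * pd i (fun z => Ψ z t) y)
        = (fun y => (b * (‖y‖^2+R^2) ^ (-(1/α))) * y i) := by
    intro i
    funext y
    have hqy : 0 < ‖y‖^2 + R^2 := by positivity
    rw [pdΨ y i, hfun y,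
      Real.mul_rpow ha.le (Real.rpow_nonneg hqy.le _),
      ← Real.rpow_mul hqy.le,
      show (-(1/α)) * (-α) = 1 by field_simp,
      Real.rpow_one,
      Real.rpow_sub hqy, Real.rpow_one, hbdef]
    field_simp
  have hsum : ∑ i, pd i (fun y =>
        (n : ℝ) ^ (α - 1) * (Ψ y t) ^ (-α) * pd i (fun z => Ψ z t) y) x
      = (n:ℝ) * (b * (‖x‖^2+R^2) ^ (-(1/α)))
        + b * ((-(1/α)) * (‖x‖^2+R^2)^((-(1/α))-1)) * (2 * ‖x‖^2) := by
    have h1 : ∀ i : Fin n, pd i (fun y =>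
          (n : ℝ) ^ (α - 1) * (Ψ y t) ^ (-α) * pd i (fun z => Ψ z t) y) x
        = b * (‖x‖^2+R^2) ^ (-(1/α))
          + b * ((-(1/α)) * (‖x‖^2+R^2)^((-(1/α))-1)) * (2 * x i * x i) := by
      intro i
      rw [hflux i]
      exact pd_rpow_mul_aux n R _ _ hR x i
    rw [Finset.sum_congr rfl fun i _ => h1 i, Finset.sum_add_distrib,
      Finset.sum_const, Finset.card_univ, Fintype.card_fin, nsmul_eq_mul,
      sum_const_mul_coord_sq]
  -- time derivative
  have hD : deriv (Ψ x) t
      = Cα * ((0 - c * 1)/(‖x‖^2+R^2) * (1/α) * ((T - c*t)/(‖x‖^2+R^2)) ^ (1/α - 1)) := by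
    have hΨx : Ψ x = fun u => Cα * ((T - c * u)/(‖x‖^2+R^2)) ^ (1/α) := funext fun u => hΨ x u
    rw [hΨx]
    have h1 : HasDerivAt (fun u : ℝ => (T - c * u)/(‖x‖^2+R^2)) ((0 - c * 1)/(‖x‖^2+R^2)) t :=
      ((hasDerivAt_const t T).sub ((hasDerivAt_id t).const_mul c)).div_const _
    have h2 := (h1.rpow_const (p := 1/α) (Or.inl (by positivity))).const_mul Cα
    rw [h2.deriv]
  -- rpow simplifications
  have e1 : (‖x‖^2+R^2)^(-(1/α)) = ((‖x‖^2+R^2)^(1/α))⁻¹ := Real.rpow_neg hq.le _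
  have e2 : (‖x‖^2+R^2)^((-(1/α))-1) = ((‖x‖^2+R^2)^(1/α))⁻¹/(‖x‖^2+R^2) := by
    rw [Real.rpow_sub hq, Real.rpow_one, e1]
  have e3 : ((T - c*t)/(‖x‖^2+R^2))^(1/α - 1)
      = ((T - c*t)^(1/α)/((‖x‖^2+R^2)^(1/α))) / ((T - c*t)/(‖x‖^2+R^2)) := by
    rw [Real.rpow_sub (by positivity), Real.rpow_one, Real.div_rpow hs.le hq.le]
  have hnα2ne : (n:ℝ) * α - 2 ≠ 0 := by nlinarith
  have e4 : (Cα * (T - c*t)^(1/α))^(-α)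
      = α * (2 * (n:ℝ)^(α-1) * ((n:ℝ) * α - 2))⁻¹ * ((T - c*t))⁻¹ := by
    rw [Real.mul_rpow hCpos.le hSpos.le, Real.rpow_neg hCpos.le, hCα,
      ← Real.rpow_mul hs.le, show (1/α) * (-α) = -1 by field_simp, Real.rpow_neg_one]
    rw [show (n:ℝ) - 2/α = ((n:ℝ)*α - 2)/α by field_simp]
    rw [← mul_div_assoc, inv_div, div_eq_mul_inv]
  have hfx : Ψ x t = (Cα * (T - c*t)^(1/α)) * (‖x‖^2 + R^2) ^ (-(1/α)) := hfun x
  have hΨpos : 0 < Ψ x t := by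
    rw [hfx]
    positivity
  -- abbreviate atoms
  set s : ℝ := T - c * t with hsdef
  set q : ℝ := ‖x‖^2 + R^2 with hqdef
  set S : ℝ := s ^ (1/α) with hSdef
  set Q : ℝ := q ^ (1/α) with hQdef
  set N : ℝ := (n:ℝ) ^ (α-1) with hNdef
  clear_value s q S Q N
  have key : deriv (Ψ x) t -
      ∑ i, pd i (fun y =>
        N * (Ψ y t) ^ (-α) * pd i (fun z => Ψ z t) y) x =
      (c + n * α / (2 - n * α) -
          (2 / (2 - n * α)) * ‖x‖ ^ 2 / q) *
        (-(Ψ x t)) / (α * s) := by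
    rw [hD, hsum, hfx, hbdef, e1, e2, e3, e4]
    field_simp [hαne, hs.ne', hq.ne', hQpos.ne', hSpos.ne', hN.ne', hnα2ne, h2nα.ne',
      hCpos.ne']
    ring_nf
    rw [show (-2 + α * (n:ℝ)) = -(2 - α * n) by ring, inv_neg]
    ring
  have hw : 0 < (-(Ψ x t))/(α*s) := by
    rw [div_pos_iff]
    right
    exact ⟨by linarith, mul_neg_of_neg_of_pos hα0 hs⟩
  have hK : c - 1 < c + n * α / (2 - n * α) -
      (2 / (2 - n * α)) * ‖x‖ ^ 2 / q := by
    rw [← sub_pos]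
    have hq' : (0:ℝ) < ‖x‖ ^ 2 + R ^ 2 := by positivity
    have h5 : c + n * α / (2 - n * α) -
        (2 / (2 - n * α)) * ‖x‖ ^ 2 / q - (c - 1)
        = (2*R^2)/((2 - (n:ℝ)*α)*q) := by
      rw [hqdef]
      field_simp
      ring
    rw [h5]
    exact div_pos (by positivity) (mul_pos h2nα hq)
  refine ⟨key, ?_, ?_⟩
  · rw [key, gt_iff_lt]
    calc (c - 1) * (-(Ψ x t)) / (α * s)
        = (c - 1) * ((-(Ψ x t)) / (α * s)) := by ring
      _ < (c + ↑n * α / (2 - ↑n * α) - 2 / (2 - ↑n * α) * ‖x‖ ^ 2 / q) *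
            ((-(Ψ x t)) / (α * s)) := mul_lt_mul_of_pos_right hK hw
      _ = (c + ↑n * α / (2 - ↑n * α) - 2 / (2 - ↑n * α) * ‖x‖ ^ 2 / q) *
            (-(Ψ x t)) / (α * s) := by ring
  · rw [gt_iff_lt, mul_div_assoc]
    exact mul_pos (by linarith) hw
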